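/- Gauge invariance of the discrete Yang–Mills equations: let A be a discrete 1-form on ℤ⁴ with all components A_k^i ∈ su(2), let F = d^cA + A∪A, let h be a discrete 0-form with h_k ∈ SU(2) for all k satisfying h_{τ₁τ₂ k} = h_{τ₃τ₄ k}, h_{τ₁τ₃ k} = h_{τ₂τ₄ k}, h_{τ₁τ₄ k} = h_{τ₂τ₃ k} for all k, and let A' = h∪d^ch⁻¹ + h∪A∪h⁻¹ with curvature F' = d^cA' + A'∪A'. If d^c(TF) + A∪TF − TF∪A = 0, then d^c(TF') + A'∪TF' − TF'∪A' = 0. -/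

import Mathlib

open Matrix

noncomputable section

namespace DiscreteYM

/-- Points of the combinatorial model of ℝ⁴ (vertices of ℤ⁴). -/
abbrev Pt : Type := Fin 4 → ℤ

/-- 2×2 complex matrices, the coefficient algebra gl(2,ℂ). -/
abbrev Mat : Type := Matrix (Fin 2) (Fin 2) ℂ

/-- A discrete form on ℤ⁴: to each point `k` and each subset `S ⊆ {1,2,3,4}` a matrix.
A discrete `p`-form is such a function regarded through its values at `p`-element subsets. -/
abbrev DForm : Type := Pt → Finset (Fin 4) → Mat

/-- `shift S k` is `τ_S k`: the point `k` with each coordinate indexed by `S` increased by 1. -/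
def shift (S : Finset (Fin 4)) (k : Pt) : Pt :=
  fun i => if i ∈ S then k i + 1 else k i

/-- `ε(S) = (−1)^{|{(i,j) ∈ S×Sᶜ : j < i}|}`, the sign of the permutation of `(1,2,3,4)`
obtained by listing `S` in increasing order followed by `Sᶜ` in increasing order. -/
def sgn (S : Finset (Fin 4)) : ℤ :=
  (-1) ^ (((S ×ˢ Sᶜ).filter fun p => p.2 < p.1).card)

/-- The sign `(−1)^{|{(i,j) ∈ S₁×S₂ : j < i}|}` appearing in the cup product. -/
def sgnPair (S₁ S₂ : Finset (Fin 4)) : ℤ :=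
  (-1) ^ (((S₁ ×ˢ S₂).filter fun p => p.2 < p.1).card)

/-- The combinatorial Hodge star `T`: `(Tφ)_k^{Sᶜ} = ε(S) φ_k^S`. -/
def hodge (φ : DForm) : DForm :=
  fun k S => sgn Sᶜ • φ k Sᶜ

/-- The coboundary operator `d^c`:
`(d^cφ)_k^S = Σ_{i∈S} (−1)^{|{j∈S : j<i}|} (φ_{τ_i k}^{S∖{i}} − φ_k^{S∖{i}})`. -/
def dc (φ : DForm) : DForm :=
  fun k S => ∑ i ∈ S, ((-1 : ℤ) ^ ((S.filter fun j => j < i).card)) •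
    (φ (shift {i} k) (S.erase i) - φ k (S.erase i))

/-- The cup product `φ∪ψ` of a `p`-form `φ` with a form `ψ`:
`(φ∪ψ)_k^S = Σ_{S₁⊔S₂=S, |S₁|=p} (−1)^{|{(i,j)∈S₁×S₂ : j<i}|} φ_k^{S₁} ψ_{τ_{S₁}k}^{S₂}`. -/
def cup (p : ℕ) (φ ψ : DForm) : DForm :=
  fun k S => ∑ S₁ ∈ S.powerset.filter (fun T => T.card = p),
    sgnPair S₁ (S \ S₁) • (φ k S₁ * ψ (shift S₁ k) (S \ S₁))

/-- The discrete curvature 2-form `F = d^cA + A∪A` of a discrete 1-form `A`. -/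
def curv (A : DForm) : DForm := dc A + cup 1 A A

/-- Cup product of a 0-form `g` with a form: `(g∪φ)_k^S = g_k φ_k^S`. -/
def lcup (g : Pt → Mat) (φ : DForm) : DForm := fun k S => g k * φ k S

/-- Cup product of a form with a 0-form `g`: `(φ∪g)_k^S = φ_k^S g_{τ_S k}`. -/
def rcup (φ : DForm) (g : Pt → Mat) : DForm := fun k S => φ k S * g (shift S k)

/-- Coboundary of a 0-form `g`; in particular `(d^c g)_k^{i} = g_{τ_i k} − g_k`. -/
def dc0 (g : Pt → Mat) : DForm :=
  fun k S => ∑ i ∈ S, ((-1 : ℤ) ^ ((S.filter fun j => j < i).card)) •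
    (g (shift {i} k) - g k)


/-- Conditions (4.17) on a 0-form `h`:
`h_{τ₁τ₂k} = h_{τ₃τ₄k}`, `h_{τ₁τ₃k} = h_{τ₂τ₄k}`, `h_{τ₁τ₄k} = h_{τ₂τ₃k}` for all `k`. -/
def Cond417 (h : Pt → Mat) : Prop :=
  ∀ k : Pt,
    h (shift {0, 1} k) = h (shift {2, 3} k)
    ∧ h (shift {0, 2} k) = h (shift {1, 3} k)
    ∧ h (shift {0, 3} k) = h (shift {1, 2} k)

/-- Membership in `su(2)`: traceless skew-Hermitian 2×2 complex matrices. -/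
def MemSU2alg (m : Mat) : Prop := m.trace = 0 ∧ mᴴ = -m

/-! ### Combinatorial facts by `decide` -/

lemma L_d1 : ∀ S : Finset (Fin 4), ∀ i ∈ S,
    sgnPair {i} (S \ {i}) = (-1) ^ ((S.filter fun j => j < i).card) := by decide

lemma L_d2 : ∀ S : Finset (Fin 4), S.card = 3 → ∀ i ∈ S,
    sgnPair (S.erase i) {i} = (-1) ^ ((S.filter fun j => j < i).card) := by decide

lemma L_ps1 : ∀ S : Finset (Fin 4),
    S.powerset.filter (fun T => T.card = 1) = S.image (fun i => ({i} : Finset (Fin 4))) := by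
  decide

lemma L_ps2 : ∀ S : Finset (Fin 4), S.card = 3 →
    S.powerset.filter (fun T => T.card = 2) = S.image (fun i => S.erase i) := by decide

lemma L_sdiff : ∀ S : Finset (Fin 4), ∀ i ∈ S, S \ S.erase i = {i} := by decide

lemma pairfacts : ∀ a b : Fin 4, a < b →
    ((({a,b} : Finset (Fin 4)).filter fun j => j < a)).card = 0 ∧
    ((({a,b} : Finset (Fin 4)).filter fun j => j < b)).card = 1 ∧
    ({a,b} : Finset (Fin 4)).erase a = {b} ∧ ({a,b} : Finset (Fin 4)).erase b = {a} ∧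
    ({a,b} : Finset (Fin 4)) \ {a} = {b} ∧ ({a,b} : Finset (Fin 4)) \ {b} = {a} ∧
    sgnPair {a} (({a,b} : Finset (Fin 4)) \ {a}) = 1 ∧
    sgnPair {b} (({a,b} : Finset (Fin 4)) \ {b}) = -1 := by decide

lemma compl_card2 : ∀ S : Finset (Fin 4), S.card = 2 → Sᶜ.card = 2 := by decide

lemma card2_cases : ∀ S : Finset (Fin 4), S.card = 2 →
    S = {0,1} ∨ S = {0,2} ∨ S = {0,3} ∨ S = {1,2} ∨ S = {1,3} ∨ S = {2,3} := by decide

/-! ### shift lemmas -/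

lemma sc1 (S : Finset (Fin 4)) (i : Fin 4) (hi : i ∈ S) (k : Pt) :
    shift (S.erase i) (shift {i} k) = shift S k := by
  funext j
  simp only [shift, Finset.mem_erase, Finset.mem_singleton]
  by_cases h1 : j = i
  · subst h1; simp [hi]
  · by_cases h2 : j ∈ S <;> simp [h1, h2]

lemma sc2 (S : Finset (Fin 4)) (i : Fin 4) (hi : i ∈ S) (k : Pt) :
    shift {i} (shift (S.erase i) k) = shift S k := by
  funext j
  simp only [shift, Finset.mem_erase, Finset.mem_singleton]
  by_cases h1 : j = i
  · subst h1; simp [hi]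
  · by_cases h2 : j ∈ S <;> simp [h1, h2]

lemma sc_pair (a b : Fin 4) (hab : a ≠ b) (k : Pt) :
    shift {b} (shift {a} k) = shift {a, b} k := by
  funext j
  simp only [shift, Finset.mem_insert, Finset.mem_singleton]
  by_cases h1 : j = a
  · subst h1; simp [hab, Ne.symm hab]
  · by_cases h2 : j = b <;> simp [h1, h2, Ne.symm hab]

/-! ### sum rewrites for cup -/

lemma cup1_apply (φ ψ : DForm) (k : Pt) (S : Finset (Fin 4)) :
    cup 1 φ ψ k S = ∑ i ∈ S, sgnPair {i} (S \ {i}) • (φ k {i} * ψ (shift {i} k) (S \ {i})) := by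
  show (∑ S₁ ∈ S.powerset.filter (fun T => T.card = 1), _) = _
  rw [L_ps1 S, Finset.sum_image (fun a _ b _ hab => Finset.singleton_injective hab)]

lemma cup2_apply (φ ψ : DForm) (k : Pt) (S : Finset (Fin 4)) (hS : S.card = 3) :
    cup 2 φ ψ k S
      = ∑ i ∈ S, sgnPair (S.erase i) {i} • (φ k (S.erase i) * ψ (shift (S.erase i) k) {i}) := by
  show (∑ S₁ ∈ S.powerset.filter (fun T => T.card = 2), _) = _
  rw [L_ps2 S hS, Finset.sum_image]
  · exact Finset.sum_congr rfl fun i hi => by rw [L_sdiff S i hi]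
  · intro a ha b hb hab
    by_contra hne
    have : a ∈ S.erase b := Finset.mem_erase.mpr ⟨hne, ha⟩
    rw [← show S.erase a = S.erase b from hab] at this
    exact (Finset.notMem_erase a S) this


/-! ### algebra helpers -/

lemma sandwich (p u q s X Y : Mat) (hu : u * q = 1) :
    (p * X * u) * (q * Y * s) = p * (X * Y) * s := by
  have e : (p * X * u) * (q * Y * s) = p * (X * ((u * q) * (Y * s))) := by noncomm_ring
  rw [e, hu, one_mul]; noncomm_ring

lemma core (p q r u v w P Q a b : Mat) (h1 : u * q = 1) (h2 : v * r = 1) :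
    (q * P * w - p * Q * v) + (p * (1 + a) * u - 1) * (q * P * w)
      - (p * Q * v) * (r * (1 + b) * w - 1)
    = p * ((P - Q) + a * P - Q * b) * w := by
  have e : (q * P * w - p * Q * v) + (p * (1 + a) * u - 1) * (q * P * w)
      - (p * Q * v) * (r * (1 + b) * w - 1)
    = q * P * w - p * Q * v + p * ((1 + a) * ((u * q) * (P * w))) - q * P * w
      - p * (Q * ((v * r) * ((1 + b) * w))) + p * Q * v := by noncomm_ring
  rw [e, h1, h2]
  noncomm_ring

/-! ### curvature on pairs -/

lemma dc_pair (φ : DForm) (k : Pt) (a b : Fin 4) (hab : a < b) :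
    dc φ k {a, b} = (φ (shift {a} k) {b} - φ k {b}) - (φ (shift {b} k) {a} - φ k {a}) := by
  obtain ⟨h1, h2, h3, h4, -⟩ := pairfacts a b hab
  show (∑ i ∈ ({a,b} : Finset (Fin 4)), _) = _
  rw [Finset.sum_pair hab.ne, h1, h2, h3, h4]
  simp only [pow_zero, pow_one, one_smul, neg_one_smul]
  abel

lemma cup1_pair (φ ψ : DForm) (k : Pt) (a b : Fin 4) (hab : a < b) :
    cup 1 φ ψ k {a, b}
      = φ k {a} * ψ (shift {a} k) {b} - φ k {b} * ψ (shift {b} k) {a} := by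
  obtain ⟨-, -, -, -, h5, h6, h7, h8⟩ := pairfacts a b hab
  rw [cup1_apply, Finset.sum_pair hab.ne, h7, h8, h5, h6]
  simp only [one_smul, neg_one_smul]
  abel

lemma curv_pair (A : DForm) (k : Pt) (a b : Fin 4) (hab : a < b) :
    curv A k {a, b}
      = (1 + A k {a}) * (1 + A (shift {a} k) {b})
        - (1 + A k {b}) * (1 + A (shift {b} k) {a}) := by
  show dc A k {a,b} + cup 1 A A k {a,b} = _
  rw [dc_pair A k a b hab, cup1_pair A A k a b hab]
  noncomm_ring


section Gauge

variable (A A' : DForm) (h : Pt → Mat)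
variable (hA'eq : A' = lcup h (dc0 (fun k => (h k)⁻¹)) + rcup (lcup h A) (fun k => (h k)⁻¹))
variable (hg : ∀ x : Pt, h x * (h x)⁻¹ = 1) (gh : ∀ x : Pt, (h x)⁻¹ * h x = 1)

include hA'eq hg in
lemma A'_singleton (k : Pt) (i : Fin 4) :
    A' k {i} = h k * (1 + A k {i}) * (h (shift {i} k))⁻¹ - 1 := by
  rw [hA'eq]
  show lcup h (dc0 fun x => (h x)⁻¹) k {i} + rcup (lcup h A) (fun x => (h x)⁻¹) k {i} = _
  simp only [lcup, rcup, dc0, Finset.sum_singleton, Finset.filter_singleton,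
    if_neg (lt_irrefl i), Finset.card_empty, pow_zero, one_smul]
  have e : h k * ((h (shift {i} k))⁻¹ - (h k)⁻¹) + h k * A k {i} * (h (shift {i} k))⁻¹
      = h k * (1 + A k {i}) * (h (shift {i} k))⁻¹ - h k * (h k)⁻¹ := by noncomm_ring
  rw [e, hg k]

include hA'eq hg in
lemma A'_one (k : Pt) (i : Fin 4) :
    1 + A' k {i} = h k * (1 + A k {i}) * (h (shift {i} k))⁻¹ := by
  rw [A'_singleton A A' h hA'eq hg k i]; noncomm_ring

include hA'eq hg gh in
lemma curv_transform_lt (k : Pt) (a b : Fin 4) (hab : a < b) :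
    curv A' k {a, b} = h k * curv A k {a, b} * (h (shift {a, b} k))⁻¹ := by
  have e2 : shift {a} (shift {b} k) = shift {a, b} k := by
    rw [Finset.pair_comm a b]; exact sc_pair b a hab.ne' k
  rw [curv_pair A' k a b hab, curv_pair A k a b hab,
    A'_one A A' h hA'eq hg k a, A'_one A A' h hA'eq hg (shift {a} k) b,
    A'_one A A' h hA'eq hg k b, A'_one A A' h hA'eq hg (shift {b} k) a,
    sc_pair a b hab.ne k, e2,
    sandwich _ _ _ _ _ _ (gh (shift {a} k)), sandwich _ _ _ _ _ _ (gh (shift {b} k))]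
  noncomm_ring

include hA'eq hg gh in
lemma curv_transform (k : Pt) (S : Finset (Fin 4)) (hS2 : S.card = 2) :
    curv A' k S = h k * curv A k S * (h (shift S k))⁻¹ := by
  obtain ⟨a, b, hab, rfl⟩ := Finset.card_eq_two.mp hS2
  rcases lt_or_gt_of_ne hab with hlt | hlt
  · exact curv_transform_lt A A' h hA'eq hg gh k a b hlt
  · rw [Finset.pair_comm a b]
    exact curv_transform_lt A A' h hA'eq hg gh k b a hlt

variable (h417 : Cond417 h)

include h417 in
lemma hshift2 (k : Pt) (S : Finset (Fin 4)) (hS2 : S.card = 2) :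
    h (shift Sᶜ k) = h (shift S k) := by
  obtain ⟨c1, c2, c3⟩ := h417 k
  rcases card2_cases S hS2 with rfl | rfl | rfl | rfl | rfl | rfl
  · rw [show ({0,1} : Finset (Fin 4))ᶜ = {2,3} from by decide]; exact c1.symm
  · rw [show ({0,2} : Finset (Fin 4))ᶜ = {1,3} from by decide]; exact c2.symm
  · rw [show ({0,3} : Finset (Fin 4))ᶜ = {1,2} from by decide]; exact c3.symm
  · rw [show ({1,2} : Finset (Fin 4))ᶜ = {0,3} from by decide]; exact c3
  · rw [show ({1,3} : Finset (Fin 4))ᶜ = {0,2} from by decide]; exact c2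
  · rw [show ({2,3} : Finset (Fin 4))ᶜ = {0,1} from by decide]; exact c1

include hA'eq hg gh h417 in
lemma hodge_transform (k : Pt) (S : Finset (Fin 4)) (hS2 : S.card = 2) :
    hodge (curv A') k S = h k * hodge (curv A) k S * (h (shift S k))⁻¹ := by
  simp only [hodge]
  rw [curv_transform A A' h hA'eq hg gh k Sᶜ (compl_card2 S hS2),
    hshift2 h h417 k S hS2, mul_smul_comm, smul_mul_assoc]

end Gauge

lemma combined_eq (α X : DForm) (k : Pt) (S : Finset (Fin 4)) (hS3 : S.card = 3) :
    dc X k S + cup 1 α X k S - cup 2 X α k S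
      = ∑ i ∈ S, ((-1 : ℤ) ^ ((S.filter fun j => j < i).card)) •
          ((X (shift {i} k) (S.erase i) - X k (S.erase i))
            + α k {i} * X (shift {i} k) (S.erase i)
            - X k (S.erase i) * α (shift (S.erase i) k) {i}) := by
  rw [cup1_apply, cup2_apply _ _ _ _ hS3,
    show dc X k S = ∑ i ∈ S, ((-1 : ℤ) ^ ((S.filter fun j => j < i).card)) •
      (X (shift {i} k) (S.erase i) - X k (S.erase i)) from rfl,
    ← Finset.sum_add_distrib, ← Finset.sum_sub_distrib]
  refine Finset.sum_congr rfl fun i hi => ?_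
  rw [L_d1 S i hi, L_d2 S hS3 i hi]
  simp only [← Finset.erase_eq, smul_add, smul_sub]


/-- gauge invariance of the discrete Yang–Mills equations: for an
`su(2)`-valued 1-form `A` with curvature `F`, an `SU(2)`-valued 0-form `h`
satisfying (4.17), and `A' = h∪d^ch⁻¹ + h∪A∪h⁻¹` with curvature `F'`, if
`d^c(TF) + A∪TF − TF∪A = 0` then `d^c(TF') + A'∪TF' − TF'∪A' = 0`. -/
theorem ym_gauge_invariant (A : DForm) (hA : ∀ (k : Pt) (i : Fin 4), MemSU2alg (A k {i}))
    (h : Pt → Mat)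
    (hSU : ∀ k, h k ∈ Matrix.unitaryGroup (Fin 2) ℂ ∧ (h k).det = 1)
    (h417 : Cond417 h)
    (A' : DForm)
    (hA' : A' = lcup h (dc0 (fun k => (h k)⁻¹)) + rcup (lcup h A) (fun k => (h k)⁻¹))
    (hYM : ∀ (k : Pt) (S : Finset (Fin 4)), S.card = 3 →
      dc (hodge (curv A)) k S + cup 1 A (hodge (curv A)) k S
        - cup 2 (hodge (curv A)) A k S = 0) :
    ∀ (k : Pt) (S : Finset (Fin 4)), S.card = 3 →
      dc (hodge (curv A')) k S + cup 1 A' (hodge (curv A')) k S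
        - cup 2 (hodge (curv A')) A' k S = 0 := by
  intro k S hS3
  have hdet : ∀ x : Pt, IsUnit (h x).det := fun x => by
    rw [(hSU x).2]; exact isUnit_one
  have hg : ∀ x : Pt, h x * (h x)⁻¹ = 1 := fun x => Matrix.mul_nonsing_inv _ (hdet x)
  have gh : ∀ x : Pt, (h x)⁻¹ * h x = 1 := fun x => Matrix.nonsing_inv_mul _ (hdet x)
  rw [combined_eq A' (hodge (curv A')) k S hS3]
  have hz : (∑ i ∈ S, ((-1 : ℤ) ^ ((S.filter fun j => j < i).card)) •
      ((hodge (curv A) (shift {i} k) (S.erase i) - hodge (curv A) k (S.erase i))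
        + A k {i} * hodge (curv A) (shift {i} k) (S.erase i)
        - hodge (curv A) k (S.erase i) * A (shift (S.erase i) k) {i})) = 0 := by
    rw [← combined_eq A (hodge (curv A)) k S hS3]; exact hYM k S hS3
  have per : ∀ i ∈ S, ((-1 : ℤ) ^ ((S.filter fun j => j < i).card)) •
      ((hodge (curv A') (shift {i} k) (S.erase i) - hodge (curv A') k (S.erase i))
        + A' k {i} * hodge (curv A') (shift {i} k) (S.erase i)
        - hodge (curv A') k (S.erase i) * A' (shift (S.erase i) k) {i})
      = ((-1 : ℤ) ^ ((S.filter fun j => j < i).card)) •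
        (h k * ((hodge (curv A) (shift {i} k) (S.erase i) - hodge (curv A) k (S.erase i))
          + A k {i} * hodge (curv A) (shift {i} k) (S.erase i)
          - hodge (curv A) k (S.erase i) * A (shift (S.erase i) k) {i})
          * (h (shift S k))⁻¹) := by
    intro i hi
    have hc2 : (S.erase i).card = 2 := by rw [Finset.card_erase_of_mem hi, hS3]
    have ePl : hodge (curv A') (shift {i} k) (S.erase i)
        = h (shift {i} k) * hodge (curv A) (shift {i} k) (S.erase i) * (h (shift S k))⁻¹ := by
      rw [hodge_transform A A' h hA' hg gh h417 (shift {i} k) (S.erase i) hc2, sc1 S i hi k]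
    have eZe := hodge_transform A A' h hA' hg gh h417 k (S.erase i) hc2
    have eOn := A'_singleton A A' h hA' hg k i
    have eTw : A' (shift (S.erase i) k) {i}
        = h (shift (S.erase i) k) * (1 + A (shift (S.erase i) k) {i})
          * (h (shift S k))⁻¹ - 1 := by
      rw [A'_singleton A A' h hA' hg (shift (S.erase i) k) i, sc2 S i hi k]
    rw [ePl, eZe, eOn, eTw,
      core _ _ _ _ _ _ _ _ _ _ (gh (shift {i} k)) (gh (shift (S.erase i) k))]
  rw [Finset.sum_congr rfl per]
  have pull : (∑ i ∈ S, ((-1 : ℤ) ^ ((S.filter fun j => j < i).card)) •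
      (h k * ((hodge (curv A) (shift {i} k) (S.erase i) - hodge (curv A) k (S.erase i))
        + A k {i} * hodge (curv A) (shift {i} k) (S.erase i)
        - hodge (curv A) k (S.erase i) * A (shift (S.erase i) k) {i})
        * (h (shift S k))⁻¹))
      = h k * (∑ i ∈ S, ((-1 : ℤ) ^ ((S.filter fun j => j < i).card)) •
        ((hodge (curv A) (shift {i} k) (S.erase i) - hodge (curv A) k (S.erase i))
          + A k {i} * hodge (curv A) (shift {i} k) (S.erase i)
          - hodge (curv A) k (S.erase i) * A (shift (S.erase i) k) {i}))
        * (h (shift S k))⁻¹ := by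
    rw [Finset.mul_sum, Finset.sum_mul]
    exact Finset.sum_congr rfl fun i hi => by rw [mul_smul_comm, smul_mul_assoc]
  rw [pull, hz, mul_zero, zero_mul]


end DiscreteYM

end
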